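/- Let M be a comparison-based mechanism for a downward-closed feasibility constraint J over n bidders whose expected welfare is always at least alpha times the optimum. Fix a relative ordering of bidder values v_1 > v_2 > ... > v_n, let q_j be the probability M selects bidder j, and let J(i) = max over feasible sets S in J of |S ∩ {1,...,i}|. Then for all i, sum_{j <= i} q_j >= alpha * J(i). -/
import Mathlib


/-- Prefix-selection bound for comparison-based mechanisms.  `F` is a
downward-closed feasibility family over `n` bidders; since the mechanism is
comparison-based and the relative order of the values `v_0 > v_1 > ...` is fixed
(bidder `j` has the `(j+1)`-st largest value), its selection probabilities `q j` are
well defined, and its `α`-approximate welfare guarantee holds for every nonnegative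
nonincreasing value vector consistent with that order.  Then for every `i`,
`∑_{j < i} q j ≥ α * J(i)` where `J(i)` is the largest intersection of a feasible set
with the top `i` bidders. -/
theorem stmt12 (n : ℕ) (F : Finset (Finset (Fin n))) (hne : F.Nonempty)
    (hdc : ∀ S ∈ F, ∀ T ⊆ S, T ∈ F)
    (α : ℝ) (hα : 0 ≤ α) (q : Fin n → ℝ) (hq : ∀ j, 0 ≤ q j)
    (hW : ∀ v : Fin n → ℝ, (∀ j, 0 ≤ v j) → Antitone v →
      α * (F.sup' hne (fun S => ∑ j ∈ S, v j)) ≤ ∑ j, q j * v j)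
    (i : ℕ) :
    α * (F.sup' hne (fun S => ((S.filter (fun j : Fin n => (j : ℕ) < i)).card : ℝ)))
      ≤ ∑ j ∈ Finset.univ.filter (fun j : Fin n => (j : ℕ) < i), q j := by
  have key := hW (fun j => if (j : ℕ) < i then (1 : ℝ) else 0)
    (fun j => by positivity)
    (by
      intro a b hab
      dsimp only
      by_cases hb : (b : ℕ) < i
      · simp [hb, Nat.lt_of_le_of_lt (Fin.val_le_of_le hab) hb]
      · by_cases ha : (a : ℕ) < i <;> simp [ha, hb])
  have hsum : ∑ j, q j * (if (j : ℕ) < i then (1 : ℝ) else 0)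
      = ∑ j ∈ Finset.univ.filter (fun j : Fin n => (j : ℕ) < i), q j := by
    rw [Finset.sum_filter]
    exact Finset.sum_congr rfl (fun j _ => by by_cases h : (j : ℕ) < i <;> simp [h])
  have hsup : (F.sup' hne (fun S => ∑ j ∈ S, if (j : ℕ) < i then (1 : ℝ) else 0))
      = F.sup' hne (fun S => ((S.filter (fun j : Fin n => (j : ℕ) < i)).card : ℝ)) := by
    apply Finset.sup'_congr hne rfl
    intro S _
    simp [Finset.sum_ite, Finset.sum_const]
  rw [hsup, hsum] at key
  exact key
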